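/- For all n ≥ 1, Spoiler wins every n-integer game in at most 2n rounds. -/

import Mathlib

/-- Validity of a position of the integer game: `u` is a word of integers,
`v` a word of pairs `⟨i, i-1⟩` (written `(i, i-1)`), `ts` the list of pairs of
matched token positions. It requires: order agreement of positions; a
`u`-token labelled `t` matched to a `v`-token labelled `⟨s+1, s⟩` satisfies
`t ∈ {s+1, s}`; neighbours are matched to neighbours; and consecutive
`v`-tokens labelled `⟨i, i-1⟩ ⟨j, j-1⟩` have matched `u`-labels `(i, j)` or
`(i-1, j-1)`, not mixed. -/
def IVal (u : List ℕ) (v : List (ℕ × ℕ)) (ts : List (ℕ × ℕ)) : Prop :=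
  (∀ p ∈ ts, p.1 < u.length ∧ p.2 < v.length) ∧
  (∀ p ∈ ts, ∀ q ∈ ts, (p.1 ≤ q.1 ↔ p.2 ≤ q.2)) ∧
  (∀ p ∈ ts, ∀ (a : ℕ) (s : ℕ × ℕ), u[p.1]? = some a → v[p.2]? = some s →
      a = s.1 ∨ a = s.2) ∧
  (∀ p ∈ ts, ∀ q ∈ ts, (q.1 = p.1 + 1 ↔ q.2 = p.2 + 1)) ∧
  (∀ p ∈ ts, ∀ q ∈ ts, q.1 = p.1 + 1 → q.2 = p.2 + 1 →
      ∀ (a b : ℕ) (s t : ℕ × ℕ),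
        u[p.1]? = some a → u[q.1]? = some b →
        v[p.2]? = some s → v[q.2]? = some t →
        (a = s.1 ∧ b = t.1) ∨ (a = s.2 ∧ b = t.2))

/-- Spoiler wins the integer game on `(u, v)` from position `ts` within `k`
rounds. -/
def SWin (u : List ℕ) (v : List (ℕ × ℕ)) : ℕ → List (ℕ × ℕ) → Prop
  | 0, ts => ¬ IVal u v ts
  | k + 1, ts => ¬ IVal u v ts ∨
      (∃ i, i < u.length ∧ ∀ j, j < v.length → SWin u v k ((i, j) :: ts)) ∨
      (∃ j, j < v.length ∧ ∀ i, i < u.length → SWin u v k ((i, j) :: ts))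

theorem swin_succ (u : List ℕ) (v : List (ℕ × ℕ)) (k : ℕ) (ts : List (ℕ × ℕ)) :
    SWin u v (k+1) ts ↔ (¬ IVal u v ts ∨
      (∃ i, i < u.length ∧ ∀ j, j < v.length → SWin u v k ((i, j) :: ts)) ∨
      (∃ j, j < v.length ∧ ∀ i, i < u.length → SWin u v k ((i, j) :: ts))) := Iff.rfl

theorem swin_of_not_ival {u : List ℕ} {v : List (ℕ × ℕ)} {ts : List (ℕ × ℕ)}
    (h : ¬ IVal u v ts) : ∀ k, SWin u v k ts := by
  intro k
  cases k with
  | zero => exact h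
  | succ k => exact Or.inl h

theorem swin_mono {u : List ℕ} {v : List (ℕ × ℕ)} {k : ℕ} :
    ∀ {ts : List (ℕ × ℕ)}, SWin u v k ts → SWin u v (k+1) ts := by
  induction k with
  | zero => intro ts h; exact Or.inl h
  | succ k ih =>
    intro ts h
    rcases h with h | ⟨i, hi, f⟩ | ⟨j, hj, f⟩
    · exact Or.inl h
    · exact Or.inr (Or.inl ⟨i, hi, fun j hj => ih (f j hj)⟩)
    · exact Or.inr (Or.inr ⟨j, hj, fun i hi => ih (f i hi)⟩)

theorem swin_le {u : List ℕ} {v : List (ℕ × ℕ)} {k k' : ℕ} (h : k ≤ k')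
    {ts : List (ℕ × ℕ)} (hw : SWin u v k ts) : SWin u v k' ts := by
  induction k' with
  | zero => exact (Nat.le_zero.mp h) ▸ hw
  | succ k' ih =>
    rcases Nat.lt_or_ge k (k'+1) with h' | h'
    · exact swin_mono (ih (Nat.lt_succ_iff.mp h'))
    · exact (Nat.le_antisymm h h') ▸ hw

/-- `u`-letter at position `i`. -/
def UU (u : List ℕ) (i : ℕ) : ℕ := u.getD i 0
/-- first component of the `v`-letter at position `t`. -/
def WW (v : List (ℕ × ℕ)) (t : ℕ) : ℕ := (v.getD t (1,0)).1

/-- Penalty: 1 if exactly one side of the window has a real anchor. -/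
def IPen (su eu K : ℕ) : ℕ := if (su = 0 ↔ eu = K) then 0 else 1

theorem ipen_le_one (su eu K : ℕ) : IPen su eu K ≤ 1 := by
  unfold IPen; split <;> omega

theorem core
    (u : List ℕ) (v : List (ℕ × ℕ))
    (hU : ∀ i, i < u.length → u[i]? = some (UU u i))
    (hW : ∀ t, t < v.length → v[t]? = some (WW v t, WW v t - 1))
    (hW1 : ∀ t, t < v.length → 1 ≤ WW v t)
    (hvne : v ≠ [])
    (h00 : UU u 0 = WW v 0)
    (hKL : UU u (u.length - 1) + 1 = WW v (v.length - 1)) :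
    ∀ d c su sw eu ew ts,
    ((su = 0 ∧ sw = 0) ∨ (∃ p j, su = p + 1 ∧ sw = j + 1 ∧ (p,j) ∈ ts ∧
        p < u.length ∧ j < v.length ∧ UU u p = WW v j)) →
    ((eu = u.length ∧ ew = v.length) ∨
        (eu < u.length ∧ ew < v.length ∧ (eu, ew) ∈ ts ∧ UU u eu + 1 = WW v ew)) →
    su ≤ eu → sw ≤ ew →
    (∀ i, su ≤ i → i < eu → c ≤ UU u i) →
    (∀ t, sw ≤ t → t < ew → c + 1 ≤ WW v t ∧ WW v t ≤ c + d) →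
    SWin u v (2 * d + IPen su eu u.length) ts := by
  intro d
  induction d with
  | zero =>
    intro c su sw eu ew ts HL HR Hsue Hswe HUI HWI
    -- the w-interval is empty
    have hemp : ew ≤ sw := by
      by_contra h
      have h2 := HWI sw le_rfl (by omega)
      omega
    have hews : ew = sw := le_antisymm hemp Hswe
    rcases HL with ⟨hsu0, hsw0⟩ | ⟨p, j, hsup, hswj, hpmem, hpK, hjL, hHj⟩
    · rcases HR with ⟨heuK, hewL⟩ | ⟨heuK, hewL, hqmem, hLq⟩
      · -- both virtual: v empty, contradiction
        exfalso
        apply hvne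
        have : v.length = 0 := by omega
        exact List.length_eq_zero_iff.mp this
      · -- left virtual, right real: ew = 0
        have hew0 : ew = 0 := by omega
        by_cases heu0 : eu = 0
        · -- contradiction with head condition
          exfalso
          rw [heu0, hew0] at hLq
          omega
        · -- play u-position eu - 1; no reply possible
          have hpen : IPen su eu u.length = 1 := by
            unfold IPen
            rw [if_neg]
            simp only [iff_iff_implies_and_implies]
            intro ⟨h1, _⟩
            omega
          rw [hpen, show 2*0+1 = 0+1 by omega, swin_succ]
          refine Or.inr (Or.inl ⟨eu - 1, by omega, fun t htL => ?_⟩)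
          apply swin_of_not_ival
          intro hI
          have h2 := hI.2.1 (eu, ew) (List.mem_cons_of_mem _ hqmem)
            (eu - 1, t) (List.mem_cons_self)
          simp only at h2
          have : eu ≤ eu - 1 := h2.mpr (by rw [hew0]; omega)
          omega
    · rcases HR with ⟨heuK, hewL⟩ | ⟨heuK, hewL, hqmem, hLq⟩
      · -- left real, right virtual: sw = j + 1 = v.length
        have hjl : j = v.length - 1 := by omega
        by_cases hpk : p = u.length - 1
        · -- contradiction with last condition
          exfalso
          rw [hpk, hjl] at hHj
          omega
        · have hpen : IPen su eu u.length = 1 := by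
            unfold IPen
            rw [if_neg]
            simp only [iff_iff_implies_and_implies]
            intro ⟨_, h2⟩
            have := h2 heuK
            omega
          rw [hpen, show 2*0+1 = 0+1 by omega, swin_succ]
          refine Or.inr (Or.inl ⟨p + 1, by omega, fun t htL => ?_⟩)
          apply swin_of_not_ival
          intro hI
          have h2 := hI.2.1 (p + 1, t) (List.mem_cons_self)
            (p, j) (List.mem_cons_of_mem _ hpmem)
          simp only at h2
          have : t ≤ j := h2.mp (by omega)
          omega
      · -- both real: position is invalid
        have hpen : IPen su eu u.length = 0 := by
          unfold IPen
          rw [if_pos]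
          constructor
          · intro h; omega
          · intro h; omega
        rw [hpen, show 2*0+0 = 0 by omega]
        intro hI
        -- ew = sw = j + 1
        have h4 := hI.2.2.2.1 (p, j) hpmem (eu, ew) hqmem
        simp only at h4
        have heup : eu = p + 1 := h4.mpr (by omega)
        have h5 := hI.2.2.2.2 (p, j) hpmem (eu, ew) hqmem heup (by omega)
          (UU u p) (UU u eu) (WW v j, WW v j - 1) (WW v ew, WW v ew - 1)
          (hU p hpK) (hU eu heuK) (hW j hjL) (hW ew hewL)
        simp only at h5
        have hwj1 := hW1 j hjL
        rcases h5 with ⟨_, h5b⟩ | ⟨h5a, _⟩ <;> omega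
  | succ d IH =>
    intro c su sw eu ew ts HL HR Hsue Hswe HUI HWI
    have HeuK : eu ≤ u.length := by
      rcases HR with ⟨h, _⟩ | ⟨h, _⟩ <;> omega
    have HewL : ew ≤ v.length := by
      rcases HR with ⟨_, h⟩ | ⟨_, h, _⟩ <;> omega
    have hpen1 : IPen su eu u.length ≤ 1 := ipen_le_one _ _ _
    by_cases hA : ∃ i, su ≤ i ∧ i < eu ∧ UU u i = c
    · -- CASE A: probe the leftmost occurrence of value c in the u-interior
      set z := Nat.find hA with hzdef
      have hz : su ≤ z ∧ z < eu ∧ UU u z = c := Nat.find_spec hA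
      have hzmin : ∀ i, su ≤ i → i < z → UU u i ≠ c := by
        intro i h1 h2 hc
        exact Nat.find_min hA h2 ⟨h1, by omega, hc⟩
      have hzK : z < u.length := by omega
      rw [show 2*(d+1) + IPen su eu u.length = (2*d + IPen su eu u.length + 1) + 1 by omega,
        swin_succ]
      refine Or.inr (Or.inl ⟨z, hzK, fun t htL => ?_⟩)
      by_cases hg : sw ≤ t ∧ t < ew ∧ WW v t = c + 1
      · -- good reply : L-token (z, t); now do step 2 if needed
        by_cases hB : ∃ s, sw ≤ s ∧ s < t ∧ WW v s = c + 1
        · -- probe the rightmost occurrence of c+1 in w on [sw, t)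
          obtain ⟨s0, hs0⟩ := hB
          set Q : ℕ → Prop := fun s => sw ≤ s ∧ WW v s = c + 1 with hQdef
          have hQdec : DecidablePred Q := fun s => by unfold Q; infer_instance
          set t' := Nat.findGreatest Q (t - 1) with ht'def
          have hspec : Q t' := Nat.findGreatest_spec (P := Q) (by omega) ⟨hs0.1, hs0.2.2⟩
          have ht't : t' < t := by
            have := Nat.findGreatest_le (P := Q) (t - 1)
            omega
          have hmax : ∀ s, t' < s → s < t → WW v s ≠ c + 1 := by
            intro s h1 h2 hc
            exact Nat.findGreatest_is_greatest (P := Q) h1 (by omega)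
              ⟨by omega, hc⟩
          have ht'L : t' < v.length := by omega
          rw [swin_succ]
          refine Or.inr (Or.inr ⟨t', ht'L, fun z' hz'K => ?_⟩)
          by_cases hg2 : su ≤ z' ∧ z' < z ∧ UU u z' = c + 1
          · -- recurse : window (z', t', z, t) at level c+1
            have hpz : IPen (z'+1) z u.length = 0 := by
              unfold IPen
              rw [if_pos]
              constructor <;> (intro h; omega)
            refine swin_le (by omega) (IH (c+1) (z'+1) (t'+1) z t
              ((z', t') :: (z, t) :: ts) ?_ ?_ ?_ ?_ ?_ ?_)
            · exact Or.inr ⟨z', t', rfl, rfl, List.mem_cons_self, hz'K, ht'L,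
                by rw [hg2.2.2, hspec.2]⟩
            · exact Or.inr ⟨hzK, htL, List.mem_cons_of_mem _ (List.mem_cons_self),
                by rw [hz.2.2, hg.2.2]⟩
            · omega
            · omega
            · intro i h1 h2
              have hc := HUI i (by omega) (by omega)
              have hne := hzmin i (by omega) h2
              omega
            · intro s h1 h2
              have hc := HWI s (by omega) (by omega)
              have hne := hmax s (by omega) h2
              omega
          · -- bad reply to step-2 probe: invalid
            apply swin_of_not_ival
            intro hI
            apply hg2
            have memN : (z', t') ∈ (z', t') :: (z, t) :: ts := List.mem_cons_self
            have memZ : (z, t) ∈ (z', t') :: (z, t) :: ts :=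
              List.mem_cons_of_mem _ (List.mem_cons_self)
            have hz'z : z' < z := by
              have h2 := hI.2.1 (z, t) memZ (z', t') memN
              simp only at h2
              have : ¬ (t ≤ t') := by omega
              have := fun hh => this (h2.mp hh)
              omega
            have hsu' : su ≤ z' := by
              rcases HL with ⟨hsu0, _⟩ | ⟨p, j, hsup, hswj, hpmem, hpK, hjL, hHj⟩
              · omega
              · have memP : (p, j) ∈ (z', t') :: (z, t) :: ts :=
                  List.mem_cons_of_mem _ (List.mem_cons_of_mem _ hpmem)
                have h2 := hI.2.1 (z', t') memN (p, j) memP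
                simp only at h2
                have : ¬ (t' ≤ j) := by omega
                have := fun hh => this (h2.mp hh)
                omega
            have h3 := hI.2.2.1 (z', t') memN (UU u z') (WW v t', WW v t' - 1)
              (hU z' hz'K) (hW t' ht'L)
            simp only at h3
            have hWt' : WW v t' = c + 1 := hspec.2
            have hUz' : c ≤ UU u z' := HUI z' hsu' (by omega)
            have hnec : UU u z' ≠ c := hzmin z' hsu' hz'z
            refine ⟨hsu', hz'z, ?_⟩
            rcases h3 with h3 | h3 <;> omega
        · -- no step 2 needed: window (su/sw boundary, z, t) is already at level c+1
          refine swin_le ?_ (IH (c+1) su sw z t ((z, t) :: ts) ?_ ?_ ?_ ?_ ?_ ?_)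
          · have := ipen_le_one su z u.length
            omega
          · rcases HL with ⟨hsu0, hsw0⟩ | ⟨p, j, hsup, hswj, hpmem, hpK, hjL, hHj⟩
            · exact Or.inl ⟨hsu0, hsw0⟩
            · exact Or.inr ⟨p, j, hsup, hswj, List.mem_cons_of_mem _ hpmem, hpK, hjL, hHj⟩
          · exact Or.inr ⟨hzK, htL, List.mem_cons_self, by rw [hz.2.2, hg.2.2]⟩
          · omega
          · exact hg.1
          · intro i h1 h2
            have hc := HUI i h1 (by omega)
            have hne := hzmin i h1 h2
            omega
          · intro s h1 h2
            have hc := HWI s h1 (by omega)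
            have hne : WW v s ≠ c + 1 := fun hc2 => hB ⟨s, h1, h2, hc2⟩
            omega
      · -- bad reply to probe 1: invalid
        apply swin_of_not_ival
        intro hI
        apply hg
        have memN : (z, t) ∈ (z, t) :: ts := List.mem_cons_self
        have hswt : sw ≤ t := by
          rcases HL with ⟨hsu0, hsw0⟩ | ⟨p, j, hsup, hswj, hpmem, hpK, hjL, hHj⟩
          · omega
          · have memP : (p, j) ∈ (z, t) :: ts := List.mem_cons_of_mem _ hpmem
            have h2 := hI.2.1 (z, t) memN (p, j) memP
            simp only at h2
            have : ¬ (z ≤ p) := by omega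
            have := fun hh => this (h2.mpr hh)
            omega
        have htew : t < ew := by
          rcases HR with ⟨heuK, hewL⟩ | ⟨heuK, hewL, hqmem, hLq⟩
          · omega
          · have memQ : (eu, ew) ∈ (z, t) :: ts := List.mem_cons_of_mem _ hqmem
            have h2 := hI.2.1 (eu, ew) memQ (z, t) memN
            simp only at h2
            have : ¬ (eu ≤ z) := by omega
            have := fun hh => this (h2.mpr hh)
            omega
        have h3 := hI.2.2.1 (z, t) memN (UU u z) (WW v t, WW v t - 1)
          (hU z hzK) (hW t htL)
        simp only at h3
        have hWt := HWI t hswt htew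
        refine ⟨hswt, htew, ?_⟩
        rcases h3 with h3 | h3 <;> omega
    · by_cases hC : ∃ s, sw ≤ s ∧ s < ew ∧ WW v s = c + 1
      · -- CASE B: probe the rightmost occurrence of c+1 in the w-interior
        obtain ⟨s0, hs0⟩ := hC
        set Q : ℕ → Prop := fun s => sw ≤ s ∧ WW v s = c + 1 with hQdef
        set t' := Nat.findGreatest Q (ew - 1) with ht'def
        have hspec : Q t' := Nat.findGreatest_spec (P := Q) (by omega) ⟨hs0.1, hs0.2.2⟩
        have ht'ew : t' < ew := by
          have := Nat.findGreatest_le (P := Q) (ew - 1)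
          omega
        have hmax : ∀ s, t' < s → s < ew → WW v s ≠ c + 1 := by
          intro s h1 h2 hc
          exact Nat.findGreatest_is_greatest (P := Q) h1 (by omega) ⟨by omega, hc⟩
        have ht'L : t' < v.length := by omega
        rw [show 2*(d+1) + IPen su eu u.length = (2*d + IPen su eu u.length + 1) + 1 by omega,
          swin_succ]
        refine Or.inr (Or.inr ⟨t', ht'L, fun z' hz'K => ?_⟩)
        by_cases hg : su ≤ z' ∧ z' < eu ∧ UU u z' = c + 1
        · -- recurse: window (z', t', eu, ew) at level c+1
          refine swin_le ?_ (IH (c+1) (z'+1) (t'+1) eu ew ((z', t') :: ts) ?_ ?_ ?_ ?_ ?_ ?_)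
          · have := ipen_le_one (z'+1) eu u.length
            omega
          · exact Or.inr ⟨z', t', rfl, rfl, List.mem_cons_self, hz'K, ht'L,
              by rw [hg.2.2, hspec.2]⟩
          · rcases HR with ⟨heuK, hewL⟩ | ⟨heuK, hewL, hqmem, hLq⟩
            · exact Or.inl ⟨heuK, hewL⟩
            · exact Or.inr ⟨heuK, hewL, List.mem_cons_of_mem _ hqmem, hLq⟩
          · omega
          · omega
          · intro i h1 h2
            have hc := HUI i (by omega) h2
            have hne : UU u i ≠ c := fun hc2 => hA ⟨i, by omega, h2, hc2⟩
            omega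
          · intro s h1 h2
            have hc := HWI s (by omega) h2
            have hne := hmax s (by omega) h2
            omega
        · -- bad reply: invalid
          apply swin_of_not_ival
          intro hI
          apply hg
          have memN : (z', t') ∈ (z', t') :: ts := List.mem_cons_self
          have hsu' : su ≤ z' := by
            rcases HL with ⟨hsu0, _⟩ | ⟨p, j, hsup, hswj, hpmem, hpK, hjL, hHj⟩
            · omega
            · have memP : (p, j) ∈ (z', t') :: ts := List.mem_cons_of_mem _ hpmem
              have h2 := hI.2.1 (z', t') memN (p, j) memP
              simp only at h2
              have : ¬ (t' ≤ j) := by omega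
              have := fun hh => this (h2.mp hh)
              omega
          have hz'eu : z' < eu := by
            rcases HR with ⟨heuK, hewL⟩ | ⟨heuK, hewL, hqmem, hLq⟩
            · omega
            · have memQ : (eu, ew) ∈ (z', t') :: ts := List.mem_cons_of_mem _ hqmem
              have h2 := hI.2.1 (eu, ew) memQ (z', t') memN
              simp only at h2
              have : ¬ (ew ≤ t') := by omega
              have := fun hh => this (h2.mp hh)
              omega
          have h3 := hI.2.2.1 (z', t') memN (UU u z') (WW v t', WW v t' - 1)
            (hU z' hz'K) (hW t' ht'L)
          simp only at h3
          have hWt' : WW v t' = c + 1 := hspec.2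
          have hUz' : c ≤ UU u z' := HUI z' hsu' hz'eu
          have hnec : UU u z' ≠ c := fun hc2 => hA ⟨z', hsu', hz'eu, hc2⟩
          refine ⟨hsu', hz'eu, ?_⟩
          rcases h3 with h3 | h3 <;> omega
      · -- neither: the window is already at level c+1
        refine swin_le (by omega) (IH (c+1) su sw eu ew ts HL HR Hsue Hswe ?_ ?_)
        · intro i h1 h2
          have hc := HUI i h1 h2
          have hne : UU u i ≠ c := fun hc2 => hA ⟨i, h1, h2, hc2⟩
          omega
        · intro s h1 h2
          have hc := HWI s h1 h2
          have hne : WW v s ≠ c + 1 := fun hc2 => hC ⟨s, h1, h2, hc2⟩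
          omega

/-- Arena of the `n`-integer game: `u` is a word over `[0, n]`, `v` a word
over `{⟨i, i-1⟩ : 1 ≤ i ≤ n}`, the first letter of `v` is `⟨i, i-1⟩` where `i`
is the first letter of `u`, and the last letter of `v` is `⟨j+1, j⟩` where `j`
is the last letter of `u`. -/
def IntArena (n : ℕ) (u : List ℕ) (v : List (ℕ × ℕ)) : Prop :=
  u ≠ [] ∧ v ≠ [] ∧
  (∀ a ∈ u, a ≤ n) ∧
  (∀ s ∈ v, 1 ≤ s.1 ∧ s.1 ≤ n ∧ s.2 + 1 = s.1) ∧
  (∀ i : ℕ, u.head? = some i → v.head? = some (i, i - 1)) ∧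
  (∀ j : ℕ, u.getLast? = some j → v.getLast? = some (j + 1, j))

/-- for all `n ≥ 1`, Spoiler wins every `n`-integer game in at
most `2n` rounds. -/
theorem spoiler_wins_integer_game (n : ℕ) (hn : 1 ≤ n)
    (u : List ℕ) (v : List (ℕ × ℕ)) (h : IntArena n u v) :
    SWin u v (2 * n) [] := by
  obtain ⟨hune, hvne, hub, hvb, hhead, hlast⟩ := h
  have hul : 0 < u.length := List.length_pos_iff.mpr hune
  have hvl : 0 < v.length := List.length_pos_iff.mpr hvne
  have hU : ∀ i, i < u.length → u[i]? = some (UU u i) := by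
    intro i hi
    rw [List.getElem?_eq_getElem hi]
    exact congrArg some (List.getD_eq_getElem u 0 hi).symm
  have hW : ∀ t, t < v.length → v[t]? = some (WW v t, WW v t - 1) := by
    intro t ht
    rw [List.getElem?_eq_getElem ht]
    have hmem : v[t] ∈ v := List.getElem_mem ht
    have hs := hvb _ hmem
    have hWt : WW v t = v[t].1 := by
      unfold WW
      rw [List.getD_eq_getElem v (1,0) ht]
    refine congrArg some ?_
    rw [hWt]
    have : v[t].1 - 1 = v[t].2 := by omega
    rw [this]
  have hW1 : ∀ t, t < v.length → 1 ≤ WW v t := by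
    intro t ht
    have hmem : v[t] ∈ v := List.getElem_mem ht
    have hs := hvb _ hmem
    have hWt : WW v t = v[t].1 := by
      unfold WW
      rw [List.getD_eq_getElem v (1,0) ht]
    omega
  have hWn : ∀ t, t < v.length → WW v t ≤ n := by
    intro t ht
    have hmem : v[t] ∈ v := List.getElem_mem ht
    have hs := hvb _ hmem
    have hWt : WW v t = v[t].1 := by
      unfold WW
      rw [List.getD_eq_getElem v (1,0) ht]
    omega
  have h00 : UU u 0 = WW v 0 := by
    have h1 : u.head? = some (UU u 0) := by
      rw [List.head?_eq_getElem?]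
      exact hU 0 hul
    have h2 := hhead (UU u 0) h1
    rw [List.head?_eq_getElem?] at h2
    have h3 := hW 0 hvl
    rw [h2] at h3
    have := Option.some.inj h3
    exact congrArg Prod.fst this
  have hKL : UU u (u.length - 1) + 1 = WW v (v.length - 1) := by
    have h1 : u.getLast? = some (UU u (u.length - 1)) := by
      rw [List.getLast?_eq_getElem?]
      exact hU _ (by omega)
    have h2 := hlast _ h1
    rw [List.getLast?_eq_getElem?] at h2
    have h3 := hW (v.length - 1) (by omega)
    rw [h2] at h3
    have := Option.some.inj h3
    exact congrArg Prod.fst this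
  have hcore := core u v hU hW hW1 hvne h00 hKL n 0 0 0 u.length v.length []
    (Or.inl ⟨rfl, rfl⟩) (Or.inl ⟨rfl, rfl⟩) (Nat.zero_le _) (Nat.zero_le _)
    (fun i _ _ => Nat.zero_le _)
    (fun t _ ht => ⟨hW1 t ht, by simpa using hWn t ht⟩)
  have hpen : IPen 0 u.length u.length = 0 := by
    unfold IPen
    rw [if_pos (by constructor <;> (intro; rfl))]
  rw [hpen] at hcore
  simpa using hcore
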